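/- Any [n,k]_q Reed–Solomon code (with distinct evaluation points, k ≥ 2) that can correct any n - 2k + 1 worst-case insertion-deletion errors must satisfy q ≥ (1/2)^{1/(k-1)} · (n / ((2k-1)(k-1)))^{(2k-1)/(k-1)}. In particular q ≥ (1/2) · (n/((2k-1)(k-1)))^{(2k-1)/(k-1)}. -/

import Mathlib

set_option linter.unusedSectionVars false
set_option maxHeartbeats 1000000
open Finset Polynomial

lemma aux_fact_prod (m : ℕ) : m.factorial = ∏ i ∈ range m, (m - i) := by
  rw [← Finset.prod_range_add_one_eq_factorial, ← Finset.prod_range_reflect]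
  exact Finset.prod_congr rfl fun i hi => by
    rw [mem_range] at hi; omega

lemma aux_pow_le_choose {m n : ℕ} (h : m ≤ n) : n ^ m ≤ m ^ m * n.choose m := by
  have key : n ^ m * m.factorial ≤ m ^ m * n.descFactorial m := by
    have h1 : n ^ m * m.factorial = ∏ i ∈ range m, (n * (m - i)) := by
      rw [Finset.prod_mul_distrib, Finset.prod_const, card_range, aux_fact_prod]
    have h2 : m ^ m * n.descFactorial m = ∏ i ∈ range m, (m * (n - i)) := by
      rw [Finset.prod_mul_distrib, Finset.prod_const, card_range,
        Nat.descFactorial_eq_prod_range]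
    rw [h1, h2]
    refine Finset.prod_le_prod' fun i hi => ?_
    rw [mem_range] at hi
    have h3 : m * i ≤ n * i := Nat.mul_le_mul_right _ h
    calc n * (m - i) = n * m - n * i := by rw [Nat.mul_sub]
      _ ≤ m * n - m * i := by rw [mul_comm m n]; exact Nat.sub_le_sub_left h3 _
      _ = m * (n - i) := by rw [Nat.mul_sub]
  rw [Nat.descFactorial_eq_factorial_mul_choose, ← mul_assoc,
    mul_comm (m ^ m) (m.factorial), mul_assoc, mul_comm m.factorial] at key
  exact Nat.le_of_mul_le_mul_right key m.factorial_pos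

section
variable {F : Type*} [Field F] [Fintype F] [DecidableEq F]

noncomputable def auxPoly (k : ℕ) (a : Fin k → F) : Polynomial F :=
  ∑ i : Fin k, Polynomial.monomial (i : ℕ) (a i)

lemma auxPoly_coeff (k : ℕ) (a : Fin k → F) (j : Fin k) :
    (auxPoly k a).coeff (j : ℕ) = a j := by
  rw [auxPoly, Polynomial.finset_sum_coeff]
  simp only [Polynomial.coeff_monomial]
  have : ∀ x : Fin k, ((x : ℕ) = (j : ℕ)) = (x = j) := fun x => by
    simp [Fin.val_eq_val]
  simp only [this]
  simp

lemma auxPoly_natDegree_lt (k : ℕ) (hk : 1 ≤ k) (a : Fin k → F) :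
    (auxPoly k a).natDegree < k := by
  have : (auxPoly k a).natDegree ≤ k - 1 := by
    apply Polynomial.natDegree_sum_le_of_forall_le
    intro i _
    exact le_trans (Polynomial.natDegree_monomial_le _) (by omega)
  omega

lemma auxPoly_inj (k : ℕ) : Function.Injective (auxPoly k (F := F)) := by
  intro a b h
  funext j
  rw [← auxPoly_coeff k a j, ← auxPoly_coeff k b j, h]
end
open Finset Polynomial

lemma aux_sublist {γ : Type*} {m n : ℕ} (g : Fin n → γ) (s : Fin m → Fin n)
    (hs : StrictMono s) : (List.ofFn fun j => g (s j)).Sublist (List.ofFn g) := by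
  rw [List.sublist_iff_exists_fin_orderEmbedding_get_eq]
  have h1 : (List.ofFn fun j => g (s j)).length = m := List.length_ofFn
  have h2 : n = (List.ofFn g).length := List.length_ofFn.symm
  refine ⟨(Fin.castOrderIso h1).toOrderEmbedding.trans
    ((OrderEmbedding.ofStrictMono s hs).trans (Fin.castOrderIso h2).toOrderEmbedding), ?_⟩
  intro i
  simp [List.get_ofFn]
  rfl

lemma aux_fiber {F : Type*} [Field F] [DecidableEq F] {n : ℕ} (α : Fin n → F)
    (hα : Function.Injective α) (f : Polynomial F) (hf : 0 < f.natDegree) (c : F) :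
    (Finset.univ.filter (fun i : Fin n => f.eval (α i) = c)).card ≤ f.natDegree := by
  have hne : f - C c ≠ 0 := by
    intro h
    have : f = C c := by linear_combination (norm := ring_nf) h
    rw [this, natDegree_C] at hf; exact lt_irrefl 0 hf
  calc (Finset.univ.filter (fun i : Fin n => f.eval (α i) = c)).card
      ≤ (f - C c).roots.toFinset.card := by
        apply Finset.card_le_card_of_injOn (fun i => α i)
        · intro i hi
          rw [Finset.mem_coe, Finset.mem_filter] at hi
          rw [Finset.mem_coe, Multiset.mem_toFinset, mem_roots hne, IsRoot.def]
          simp [hi.2]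
        · exact fun a _ b _ h => hα h
    _ ≤ Multiset.card (f - C c).roots := (f - C c).roots.toFinset_card_le
    _ ≤ (f - C c).natDegree := (f - C c).card_roots'
    _ = f.natDegree := natDegree_sub_C
open Finset

lemma aux_card_strictMono (m n : ℕ) :
    (Finset.univ.filter (fun s : Fin m → Fin n => StrictMono s)).card = n.choose m := by
  have : n.choose m = (Finset.powersetCard m (Finset.univ : Finset (Fin n))).card := by
    rw [Finset.card_powersetCard, Finset.card_fin]
  rw [this]
  · apply Finset.card_bij (fun s _ => Finset.image s Finset.univ)
    · intro s hs
      rw [Finset.mem_filter] at hs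
      rw [Finset.mem_powersetCard]
      exact ⟨Finset.subset_univ _, by
        rw [Finset.card_image_of_injective _ hs.2.injective, Finset.card_fin]⟩
    · intro s hs t ht hst
      rw [Finset.mem_filter] at hs ht
      have hcs : (Finset.image s Finset.univ).card = m := by
        rw [Finset.card_image_of_injective _ hs.2.injective, Finset.card_fin]
      have h1 := Finset.orderEmbOfFin_unique hcs
        (f := s) (fun x => Finset.mem_image_of_mem _ (Finset.mem_univ x)) hs.2
      have h2 := Finset.orderEmbOfFin_unique (hst ▸ hcs : (Finset.image t Finset.univ).card = m)
        (f := t) (fun x => Finset.mem_image_of_mem _ (Finset.mem_univ x)) ht.2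
      funext x
      rw [h1, h2]
      have : HEq ((Finset.image s Finset.univ).orderEmbOfFin hcs)
          ((Finset.image t Finset.univ).orderEmbOfFin (hst ▸ hcs)) := by
        congr 1
      exact congrFun (congrArg _ (eq_of_heq this)) x
    · intro s hs
      rw [Finset.mem_powersetCard] at hs
      refine ⟨⇑(s.orderEmbOfFin hs.2), ?_, ?_⟩
      · rw [Finset.mem_filter]
        exact ⟨Finset.mem_univ _, (s.orderEmbOfFin hs.2).strictMono⟩
      · have := Finset.range_orderEmbOfFin s hs.2
        rw [← Finset.coe_inj, Finset.coe_image, Finset.coe_univ, Set.image_univ, this]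

lemma aux_T_card {F : Type*} [Field F] [Fintype F] [DecidableEq F] (k : ℕ) (hk : 2 ≤ k) :
    Fintype.card F ^ k - Fintype.card F ≤
      (Finset.univ.filter (fun a : Fin k → F => ∃ i : Fin k, (i : ℕ) ≠ 0 ∧ a i ≠ 0)).card := by
  have hneg : (Finset.univ.filter
      (fun a : Fin k → F => ¬ ∃ i : Fin k, (i : ℕ) ≠ 0 ∧ a i ≠ 0)).card ≤ Fintype.card F := by
    rw [← Finset.card_univ]
    have hk0 : 0 < k := by omega
    apply Finset.card_le_card_of_injOn (fun a => a ⟨0, hk0⟩)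
    · intro a _; exact Finset.mem_univ _
    · intro a ha b hb hab
      rw [Finset.mem_coe, Finset.mem_filter] at ha hb
      push_neg at ha hb
      funext i
      by_cases hi : (i : ℕ) = 0
      · have hieq : i = ⟨0, hk0⟩ := by ext; simpa using hi
        rw [hieq]; exact hab
      · rw [ha.2 i hi, hb.2 i hi]
  have hsplit : (Finset.univ.filter
        (fun a : Fin k → F => ∃ i : Fin k, (i : ℕ) ≠ 0 ∧ a i ≠ 0)).card +
      (Finset.univ.filter
        (fun a : Fin k → F => ¬ ∃ i : Fin k, (i : ℕ) ≠ 0 ∧ a i ≠ 0)).card =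
      (Finset.univ : Finset (Fin k → F)).card :=
    Finset.card_filter_add_card_filter_not _
  have huniv : (Finset.univ : Finset (Fin k → F)).card = Fintype.card F ^ k := by
    rw [Finset.card_univ, Fintype.card_fun, Fintype.card_fin]
  have key : ∀ x y u q2 : ℕ, x + y = u → y ≤ q2 → u - q2 ≤ x := by clear hsplit hneg huniv; omega
  exact key _ _ _ _ (hsplit.trans huniv) hneg

lemma aux_count {F : Type*} [Field F] [Fintype F] [DecidableEq F]
    (n k : ℕ) (hk : 2 ≤ k)
    (α : Fin n → F) (hα : Function.Injective α)
    (hcorr : ∀ f g : Polynomial F, f.natDegree < k → g.natDegree < k → f ≠ g →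
      ∀ u : List F, u.Sublist (List.ofFn fun i => f.eval (α i)) →
        u.Sublist (List.ofFn fun i => g.eval (α i)) → u.length ≤ 2 * k - 2) :
    (Fintype.card F ^ k - Fintype.card F) * n.choose (2 * k - 1) ≤
      (k - 1) ^ (2 * k - 1) * Fintype.card F ^ (2 * k - 1) := by
  set q := Fintype.card F with hq
  set m := 2 * k - 1 with hm
  set A : Finset (Fin m → Fin n) := Finset.univ.filter StrictMono with hA
  set Φ : (Fin k → F) → (Fin m → Fin n) → (Fin m → F) :=
    fun a s j => (auxPoly k a).eval (α (s j)) with hΦ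
  set T : Finset (Fin k → F) :=
    Finset.univ.filter (fun a => ∃ i : Fin k, (i : ℕ) ≠ 0 ∧ a i ≠ 0) with hT
  -- degree facts for a ∈ T
  have hdegpos : ∀ a ∈ T, 0 < (auxPoly k a (F := F)).natDegree := by
    intro a ha
    rw [hT, Finset.mem_filter] at ha
    obtain ⟨i, hi0, hia⟩ := ha.2
    have : (i : ℕ) ≤ (auxPoly k a).natDegree :=
      Polynomial.le_natDegree_of_ne_zero (by rw [auxPoly_coeff]; exact hia)
    omega
  have hdeglt : ∀ a : Fin k → F, (auxPoly k a).natDegree < k :=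
    fun a => auxPoly_natDegree_lt k (by omega) a
  -- Step 1
  have hTcard : q ^ k - q ≤ T.card := by rw [hT, hq]; exact aux_T_card k hk
  -- Step 2 : per-polynomial bound
  have hstep2 : ∀ a ∈ T, n.choose m ≤ (k - 1) ^ m * (A.image (Φ a)).card := by
    intro a ha
    rw [← aux_card_strictMono m n]
    apply Finset.card_le_mul_card_image
    intro w hw
    calc (A.filter (fun s => Φ a s = w)).card
        ≤ (Fintype.piFinset fun j : Fin m =>
            Finset.univ.filter (fun i : Fin n => (auxPoly k a).eval (α i) = w j)).card := by
          apply Finset.card_le_card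
          intro s hs
          rw [Finset.mem_filter] at hs
          rw [Fintype.mem_piFinset]
          intro j
          rw [Finset.mem_filter]
          exact ⟨Finset.mem_univ _, congrFun hs.2 j⟩
      _ ≤ (k - 1) ^ m := by
          rw [Fintype.card_piFinset]
          calc ∏ j : Fin m, (Finset.univ.filter
                (fun i : Fin n => (auxPoly k a).eval (α i) = w j)).card
              ≤ ∏ _j : Fin m, (k - 1) := by
                apply Finset.prod_le_prod'
                intro j _
                exact le_trans (aux_fiber α hα _ (hdegpos a ha) (w j)) (by have := hdeglt a; omega)
            _ = (k - 1) ^ m := by rw [Finset.prod_const, Finset.card_univ, Fintype.card_fin]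
  -- Step 3 : disjointness
  have hdisj : (T : Set (Fin k → F)).PairwiseDisjoint (fun a => A.image (Φ a)) := by
    intro a ha b hb hab
    simp only [Function.onFun]
    rw [Finset.disjoint_left]
    rintro w hwa hwb
    rw [Finset.mem_image] at hwa hwb
    obtain ⟨s, hsA, hsw⟩ := hwa
    obtain ⟨t, htA, htw⟩ := hwb
    rw [hA, Finset.mem_filter] at hsA htA
    have hsub1 : (List.ofFn w).Sublist (List.ofFn fun i => (auxPoly k a).eval (α i)) := by
      rw [← hsw]; exact aux_sublist (fun i => (auxPoly k a).eval (α i)) s hsA.2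
    have hsub2 : (List.ofFn w).Sublist (List.ofFn fun i => (auxPoly k b).eval (α i)) := by
      rw [← htw]; exact aux_sublist (fun i => (auxPoly k b).eval (α i)) t htA.2
    have hne : auxPoly k a (F := F) ≠ auxPoly k b := fun h => hab (auxPoly_inj k h)
    have := hcorr _ _ (hdeglt a) (hdeglt b) hne (List.ofFn w) hsub1 hsub2
    rw [List.length_ofFn] at this
    omega
  -- Step 4 : combine
  calc (q ^ k - q) * n.choose m ≤ T.card * n.choose m :=
        Nat.mul_le_mul_right _ hTcard
    _ = ∑ _a ∈ T, n.choose m := by rw [Finset.sum_const, smul_eq_mul]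
    _ ≤ ∑ a ∈ T, (k - 1) ^ m * (A.image (Φ a)).card := Finset.sum_le_sum hstep2
    _ = (k - 1) ^ m * ∑ a ∈ T, (A.image (Φ a)).card := by rw [Finset.mul_sum]
    _ = (k - 1) ^ m * (T.biUnion (fun a => A.image (Φ a))).card := by
        rw [Finset.card_biUnion (fun a ha b hb hab => hdisj ha hb hab)]
    _ ≤ (k - 1) ^ m * q ^ m := by
        apply Nat.mul_le_mul_left
        calc (T.biUnion fun a => A.image (Φ a)).card
            ≤ (Finset.univ : Finset (Fin m → F)).card := Finset.card_le_card (Finset.subset_univ _)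
          _ = q ^ m := by rw [Finset.card_univ, Fintype.card_fun, Fintype.card_fin]
-- final analytic step, given the key pow inequality
lemma aux_final (kR qR X : ℝ) (hk : 1 ≤ kR - 1) (hq : 2 ≤ qR) (hX : 0 ≤ X)
    (key : X ^ ((2 * kR - 1 : ℝ)) ≤ 2 * qR ^ (kR - 1 : ℝ)) :
    ((1 : ℝ) / 2) ^ ((1 : ℝ) / (kR - 1)) * X ^ ((2 * kR - 1) / (kR - 1)) ≤ qR ∧
    (1 / 2 : ℝ) * X ^ ((2 * kR - 1) / (kR - 1)) ≤ qR := by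
  set e := kR - 1 with he
  have he0 : 0 < e := by linarith
  have hq0 : (0:ℝ) < qR := by linarith
  have h1 : X ^ ((2 * kR - 1) / e) ≤ (2 : ℝ) ^ ((1:ℝ)/e) * qR := by
    have h2 : (X ^ ((2 * kR - 1 : ℝ))) ^ ((1:ℝ)/e) ≤ (2 * qR ^ e) ^ ((1:ℝ)/e) :=
      Real.rpow_le_rpow (Real.rpow_nonneg hX _) key (by positivity)
    rw [← Real.rpow_mul hX, mul_one_div] at h2
    rw [Real.mul_rpow (by norm_num) (Real.rpow_nonneg hq0.le _),
      ← Real.rpow_mul hq0.le, mul_one_div, div_self he0.ne', Real.rpow_one] at h2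
    exact h2
  constructor
  · calc ((1:ℝ)/2) ^ ((1:ℝ)/e) * X ^ ((2 * kR - 1) / e)
        ≤ ((1:ℝ)/2) ^ ((1:ℝ)/e) * ((2:ℝ) ^ ((1:ℝ)/e) * qR) := by
          apply mul_le_mul_of_nonneg_left h1 (Real.rpow_nonneg (by norm_num) _)
      _ = (((1:ℝ)/2) * 2) ^ ((1:ℝ)/e) * qR := by
          rw [Real.mul_rpow (by norm_num) (by norm_num), mul_assoc]
      _ = qR := by norm_num
  · have hhalf : (1/2 : ℝ) ≤ ((1:ℝ)/2) ^ ((1:ℝ)/e) := by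
      have := Real.rpow_le_rpow_of_exponent_ge (x := (1/2:ℝ)) (by norm_num) (by norm_num)
        (show (1:ℝ)/e ≤ 1 by rw [div_le_one he0]; linarith)
      rwa [Real.rpow_one] at this
    calc (1/2 : ℝ) * X ^ ((2 * kR - 1) / e)
        ≤ ((1:ℝ)/2) ^ ((1:ℝ)/e) * X ^ ((2 * kR - 1) / e) :=
          mul_le_mul_of_nonneg_right hhalf (Real.rpow_nonneg hX _)
      _ ≤ qR := by
          calc ((1:ℝ)/2) ^ ((1:ℝ)/e) * X ^ ((2 * kR - 1) / e)
              ≤ ((1:ℝ)/2) ^ ((1:ℝ)/e) * ((2:ℝ) ^ ((1:ℝ)/e) * qR) :=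
                mul_le_mul_of_nonneg_left h1 (Real.rpow_nonneg (by norm_num) _)
            _ = (((1:ℝ)/2) * 2) ^ ((1:ℝ)/e) * qR := by
                rw [Real.mul_rpow (by norm_num) (by norm_num), mul_assoc]
            _ = qR := by norm_num
-- the key real inequality
lemma aux_key {F : Type*} [Field F] [Fintype F] [DecidableEq F]
    (n k : ℕ) (hk : 2 ≤ k)
    (α : Fin n → F) (hα : Function.Injective α)
    (hcorr : ∀ f g : Polynomial F, f.natDegree < k → g.natDegree < k → f ≠ g →
      ∀ u : List F, u.Sublist (List.ofFn fun i => f.eval (α i)) →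
        u.Sublist (List.ofFn fun i => g.eval (α i)) → u.length ≤ 2 * k - 2) :
    ((n : ℝ) / ((2 * (k : ℝ) - 1) * ((k : ℝ) - 1))) ^ (2 * k - 1 : ℕ) ≤
      2 * (Fintype.card F : ℝ) ^ (k - 1 : ℕ) := by
  set q := Fintype.card F with hq
  have hq2 : 2 ≤ q := Fintype.one_lt_card
  have hQ2 : (2:ℝ) ≤ (q:ℝ) := by exact_mod_cast hq2
  have hkR : (2:ℝ) ≤ (k:ℝ) := by exact_mod_cast hk
  have hD0 : (0:ℝ) < (2 * (k : ℝ) - 1) * ((k : ℝ) - 1) := by nlinarith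
  have h2q : (2:ℝ) ≤ (q:ℝ) ^ (k - 1 : ℕ) := by
    calc (2:ℝ) = 2 ^ 1 := (pow_one 2).symm
      _ ≤ (2:ℝ) ^ (k - 1 : ℕ) := pow_le_pow_right₀ (by norm_num) (by omega)
      _ ≤ (q:ℝ) ^ (k - 1 : ℕ) := pow_le_pow_left₀ (by norm_num) hQ2 _
  by_cases hn : n < 2 * k - 1
  · -- small n
    have hX1 : (n : ℝ) / ((2 * (k : ℝ) - 1) * ((k : ℝ) - 1)) ≤ 1 := by
      rw [div_le_one hD0]
      have : (n : ℝ) ≤ 2 * (k:ℝ) - 1 := by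
        have : (n:ℝ) < ((2*k-1 : ℕ):ℝ) := by exact_mod_cast hn
        rw [Nat.cast_sub (by omega)] at this
        push_cast at this
        linarith
      nlinarith
    calc ((n : ℝ) / ((2 * (k : ℝ) - 1) * ((k : ℝ) - 1))) ^ (2 * k - 1 : ℕ)
        ≤ 1 := pow_le_one₀ (by positivity) hX1
      _ ≤ 2 * (q:ℝ) ^ (k - 1 : ℕ) := by nlinarith
  · -- main case
    push_neg at hn
    set m := 2 * k - 1 with hm
    have c1 : n ^ m ≤ m ^ m * n.choose m := aux_pow_le_choose hn
    have c2 := aux_count n k hk α hα hcorr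
    have hqk : q < q ^ k := by
      calc q = q ^ 1 := (pow_one q).symm
        _ < q ^ k := Nat.pow_lt_pow_right (by omega) (by omega)
    set Q := (q:ℝ) with hQdef
    have hQk : (0:ℝ) < Q ^ k - Q := by
      have h := (Nat.cast_lt (α := ℝ)).mpr hqk
      push_cast at h
      have : Q < Q ^ k := h
      linarith
    -- real casts
    have r1 : (n:ℝ) ^ m ≤ (m:ℝ) ^ m * (n.choose m : ℝ) := by exact_mod_cast c1
    have r2 : (Q ^ k - Q) * (n.choose m : ℝ) ≤ ((k:ℝ) - 1) ^ m * Q ^ m := by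
      have := c2
      have hcast : ((q ^ k - q : ℕ) : ℝ) = Q ^ k - Q := by
        rw [Nat.cast_sub hqk.le]; push_cast; rfl
      have hcast2 : ((k - 1 : ℕ) : ℝ) = (k:ℝ) - 1 := by
        rw [Nat.cast_sub (by omega)]; norm_num
      calc (Q ^ k - Q) * (n.choose m : ℝ)
          = ((q ^ k - q : ℕ) : ℝ) * ((n.choose m : ℕ) : ℝ) := by rw [hcast]
        _ = (((q ^ k - q) * n.choose m : ℕ) : ℝ) := by push_cast; ring
        _ ≤ (((k - 1) ^ m * q ^ m : ℕ) : ℝ) := by exact_mod_cast c2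
        _ = ((k:ℝ) - 1) ^ m * Q ^ m := by push_cast [hcast2]; rfl
    have r3 : Q ^ m ≤ 2 * Q ^ (k - 1 : ℕ) * (Q ^ k - Q) := by
      have e1 : Q ^ m = Q ^ (k - 1 : ℕ) * Q ^ k := by
        rw [← pow_add]; congr 1; omega
      have e2 : Q ^ k = Q ^ (k - 1 : ℕ) * Q := by
        rw [← pow_succ]; congr 1; omega
      have hp : (0:ℝ) ≤ Q ^ (k - 1 : ℕ) := by positivity
      nlinarith [mul_nonneg hp (sub_nonneg.2 (by nlinarith [e2] : 2 * Q ≤ Q ^ k))]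
    -- combine
    have hDm : ((2 * (k : ℝ) - 1) * ((k : ℝ) - 1)) ^ m = (m:ℝ) ^ m * ((k:ℝ) - 1) ^ m := by
      rw [mul_pow]
      congr 2
      rw [hm, Nat.cast_sub (by omega)]
      push_cast; ring
    rw [div_pow, div_le_iff₀ (pow_pos hD0 m)]
    have hchoose : (0:ℝ) ≤ (n.choose m : ℝ) := by positivity
    have step : (n:ℝ) ^ m * (Q ^ k - Q) ≤
        (m:ℝ) ^ m * ((k:ℝ) - 1) ^ m * (2 * Q ^ (k - 1 : ℕ)) * (Q ^ k - Q) := by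
      calc (n:ℝ) ^ m * (Q ^ k - Q)
          ≤ ((m:ℝ) ^ m * (n.choose m : ℝ)) * (Q ^ k - Q) :=
            mul_le_mul_of_nonneg_right r1 hQk.le
        _ = (m:ℝ) ^ m * ((Q ^ k - Q) * (n.choose m : ℝ)) := by ring
        _ ≤ (m:ℝ) ^ m * (((k:ℝ) - 1) ^ m * Q ^ m) :=
            mul_le_mul_of_nonneg_left r2 (by positivity)
        _ ≤ (m:ℝ) ^ m * (((k:ℝ) - 1) ^ m * (2 * Q ^ (k - 1 : ℕ) * (Q ^ k - Q))) := by
            have hk1 : (0:ℝ) ≤ ((k:ℝ) - 1) ^ m := pow_nonneg (by linarith) _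
            have := mul_le_mul_of_nonneg_left r3 hk1
            exact mul_le_mul_of_nonneg_left this (by positivity)
        _ = (m:ℝ) ^ m * ((k:ℝ) - 1) ^ m * (2 * Q ^ (k - 1 : ℕ)) * (Q ^ k - Q) := by ring
    have := le_of_mul_le_mul_right (by linarith [step] :
      (n:ℝ) ^ m * (Q ^ k - Q) ≤ ((m:ℝ) ^ m * ((k:ℝ) - 1) ^ m * (2 * Q ^ (k - 1 : ℕ))) * (Q ^ k - Q)) hQk
    rw [hDm]
    calc (n:ℝ) ^ m ≤ (m:ℝ) ^ m * ((k:ℝ) - 1) ^ m * (2 * Q ^ (k - 1 : ℕ)) := this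
      _ = 2 * Q ^ (k - 1 : ℕ) * ((m:ℝ) ^ m * ((k:ℝ) - 1) ^ m) := by ring

/-- Field size lower bound: any `[n,k]_q` RS code (distinct evaluation points,
`k ≥ 2`) correcting any `n - 2k + 1` insdel errors (i.e. distinct codewords have
LCS at most `2k-2`) satisfies
`q ≥ (1/2)^{1/(k-1)} · (n/((2k-1)(k-1)))^{(2k-1)/(k-1)}`, and in particular
`q ≥ (1/2) · (n/((2k-1)(k-1)))^{(2k-1)/(k-1)}`. -/
theorem rs_field_size_lower_bound {F : Type*} [Field F] [Fintype F]
    (n k : ℕ) (hk : 2 ≤ k)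
    (α : Fin n → F) (hα : Function.Injective α)
    (hcorr : ∀ f g : Polynomial F, f.natDegree < k → g.natDegree < k → f ≠ g →
      ∀ u : List F, u.Sublist (List.ofFn fun i => f.eval (α i)) →
        u.Sublist (List.ofFn fun i => g.eval (α i)) → u.length ≤ 2 * k - 2) :
    ((1 : ℝ) / 2) ^ ((1 : ℝ) / ((k : ℝ) - 1)) *
        ((n : ℝ) / ((2 * (k : ℝ) - 1) * ((k : ℝ) - 1))) ^
          ((2 * (k : ℝ) - 1) / ((k : ℝ) - 1)) ≤ (Fintype.card F : ℝ) ∧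
    (1 / 2 : ℝ) *
        ((n : ℝ) / ((2 * (k : ℝ) - 1) * ((k : ℝ) - 1))) ^
          ((2 * (k : ℝ) - 1) / ((k : ℝ) - 1)) ≤ (Fintype.card F : ℝ) := by
  have _inst : DecidableEq F := Classical.decEq F
  have key := aux_key n k hk α hα hcorr
  have hk2R : (2:ℝ) ≤ (k:ℝ) := by exact_mod_cast hk
  have hkR : (1:ℝ) ≤ (k:ℝ) - 1 := by linarith
  have hq : (2:ℝ) ≤ (Fintype.card F : ℝ) := by
    exact_mod_cast (Fintype.one_lt_card : 1 < Fintype.card F)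
  have hX : (0:ℝ) ≤ (n : ℝ) / ((2 * (k : ℝ) - 1) * ((k : ℝ) - 1)) :=
    div_nonneg (Nat.cast_nonneg n) (by nlinarith)
  have key' : ((n : ℝ) / ((2 * (k : ℝ) - 1) * ((k : ℝ) - 1))) ^ (2 * (k:ℝ) - 1 : ℝ) ≤
      2 * (Fintype.card F : ℝ) ^ ((k:ℝ) - 1 : ℝ) := by
    have e1 : ((2 * k - 1 : ℕ) : ℝ) = 2 * (k:ℝ) - 1 := by
      rw [Nat.cast_sub (by omega)]; push_cast; ring
    have e2 : ((k - 1 : ℕ) : ℝ) = (k:ℝ) - 1 := by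
      rw [Nat.cast_sub (by omega)]; push_cast; ring
    rw [← Real.rpow_natCast _ (2 * k - 1), ← Real.rpow_natCast _ (k - 1), e1, e2] at key
    exact key
  exact aux_final (k:ℝ) _ _ hkR hq hX key'
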